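/- Let q be a prime, x_1,...,x_n distinct in F_q, n = 2k-1, k ≤ d ≤ n, m = d-k+1. Let D ⊆ {1,...,n} with |D| = d. Then the map (s,r) ↦ (first symbol of each share in D) = V_D applied to the first column (s, r_1) of M(s,r), from F_q^m × F_q^{k-1} (ignoring r_2,...,r_m) to F_q^d, is bijective in (s, r_1); in particular s is determined by the first qudit of each of any d shares. -/
import Mathlib


/-- d-share recovery from first qudits: the map (s,r₁) ↦ V_D·(s,r₁) formed from
the first symbol of each of d shares is bijective. -/
theorem staircase_first_qudits_bijective
    (q k d m : ℕ) [Fact (Nat.Prime q)] (hk : 1 ≤ k) (hkd : k ≤ d)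
    (hdn : d ≤ 2 * k - 1) (hm : m = d - k + 1)
    (x : Fin (2 * k - 1) → ZMod q) (hx : Function.Injective x)
    (D : Fin d ↪ Fin (2 * k - 1)) :
    Function.Bijective (fun p : (Fin m → ZMod q) × (Fin (k - 1) → ZMod q) =>
      (Matrix.of fun (i j : Fin d) => x (D i) ^ (j : ℕ)).mulVec
        (fun j => Fin.append p.1 p.2 (Fin.cast (by omega : d = m + (k - 1)) j))) := by
  have hcast : d = m + (k - 1) := by omega
  set M : Matrix (Fin d) (Fin d) (ZMod q) :=
    Matrix.of fun (i j : Fin d) => x (D i) ^ (j : ℕ) with hM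
  -- M is a Vandermonde matrix with distinct nodes
  have hdet : M.det ≠ 0 := by
    have : M = Matrix.vandermonde (fun i => x (D i)) := by
      ext i j; rfl
    rw [this, Matrix.det_vandermonde_ne_zero_iff]
    exact hx.comp D.injective
  have hMvec : Function.Bijective (M.mulVec) := by
    constructor
    · intro v w h
      have := congrArg (M⁻¹.mulVec) h
      simpa [Matrix.mulVec_mulVec, Matrix.nonsing_inv_mul M
        (isUnit_iff_ne_zero.mpr hdet)] using this
    · intro y
      refine ⟨M⁻¹.mulVec y, ?_⟩
      simp [Matrix.mulVec_mulVec, Matrix.mul_nonsing_inv M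
        (isUnit_iff_ne_zero.mpr hdet)]
  -- the append map is bijective
  have happ : Function.Bijective (fun p : (Fin m → ZMod q) × (Fin (k - 1) → ZMod q) =>
      (fun j : Fin d => Fin.append p.1 p.2 (Fin.cast hcast j))) := by
    constructor
    · intro p p' h
      have h1 : ∀ j : Fin (m + (k - 1)), Fin.append p.1 p.2 j = Fin.append p'.1 p'.2 j := by
        intro j
        have := congrFun h (Fin.cast hcast.symm j)
        simpa using this
      ext i
      · simpa [Fin.append_left] using h1 (Fin.castAdd (k - 1) i)
      · simpa [Fin.append_right] using h1 (Fin.natAdd m i)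
    · intro v
      refine ⟨(fun i => v (Fin.cast hcast.symm (Fin.castAdd (k - 1) i)),
              fun i => v (Fin.cast hcast.symm (Fin.natAdd m i))), ?_⟩
      funext j
      have : Fin.cast hcast.symm (Fin.cast hcast j) = j := rfl
      refine Fin.addCases (motive := fun t =>
        Fin.append (fun i => v (Fin.cast hcast.symm (Fin.castAdd (k - 1) i)))
          (fun i => v (Fin.cast hcast.symm (Fin.natAdd m i))) t
          = v (Fin.cast hcast.symm t)) ?_ ?_ (Fin.cast hcast j)
        |>.trans (by rw [this])
      · intro i; simp [Fin.append_left]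
      · intro i; simp [Fin.append_right]
  exact hMvec.comp happ
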